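/- Let C = {x ∈ ℝ^n : Ax ≥ 0} be a polyhedral cone, where A ∈ ℝ^{p×n} is a full-rank matrix (its rows are linearly independent), and fix d ≥ 1. Then there exists a generic (residual) set G_d in the space H_d of homogeneous polynomials of degree d such that for every g ∈ G_d, the solution set Sol(C,g) is finite. -/

import Mathlib

open Filter Topology MvPolynomial Bornology
open scoped RealInnerProductSpace Pointwise

noncomputable section

/-- `ℝ^n` as Euclidean space. -/
abbrev En (n : ℕ) := EuclideanSpace ℝ (Fin n)

/-- Evaluation of a multivariate polynomial at a point of `ℝ^n`. -/
def evalP {n : ℕ} (f : MvPolynomial (Fin n) ℝ) (x : En n) : ℝ :=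
  MvPolynomial.eval (fun i => x i) f

/-- `Sol(C,g)`: the set of global minimizers of `g` on `C`. -/
def solSet {n : ℕ} (C : Set (En n)) (g : En n → ℝ) : Set (En n) :=
  {x ∈ C | ∀ y ∈ C, g x ≤ g y}

/-- `K∞`: the asymptotic cone of `K`. -/
def asympCone {n : ℕ} (K : Set (En n)) : Set (En n) :=
  {v | ∃ (t : ℕ → ℝ) (x : ℕ → En n), (∀ k, x k ∈ K) ∧
    Tendsto t atTop atTop ∧ Tendsto (fun k => (t k)⁻¹ • x k) atTop (𝓝 v)}

/-- The gradient `∇f` of a polynomial, via its partial derivatives. -/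
def polyGrad {n : ℕ} (f : MvPolynomial (Fin n) ℝ) (x : En n) : En n :=
  WithLp.toLp 2 (fun i => MvPolynomial.eval (fun j => x j) (MvPolynomial.pderiv i f))

/-- The `ℓ2`-norm of the coefficient vector of a polynomial. -/
def l2Norm {n : ℕ} (p : MvPolynomial (Fin n) ℝ) : ℝ :=
  Real.sqrt (∑ m ∈ p.support, (MvPolynomial.coeff m p) ^ 2)

/-- `S` is generic (residual) in `X`: it contains a countable intersection of sets, each of
which is open and dense in `X` (with respect to the `ℓ2` coefficient metric). -/
def IsGenericIn {n : ℕ} (X S : Set (MvPolynomial (Fin n) ℝ)) : Prop :=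
  ∃ D : ℕ → Set (MvPolynomial (Fin n) ℝ),
    (∀ k, D k ⊆ X ∧
      (∀ g ∈ D k, ∃ ε > 0, ∀ g' ∈ X, l2Norm (g' - g) < ε → g' ∈ D k) ∧
      (∀ g ∈ X, ∀ ε > 0, ∃ g' ∈ D k, l2Norm (g' - g) < ε)) ∧
    X ∩ (⋂ k, D k) ⊆ S

/-! ### Auxiliary lemmas -/

lemma evalScale {n d : ℕ} {g : MvPolynomial (Fin n) ℝ} (hg : g.IsHomogeneous d)
    (c : ℝ) (x : Fin n → ℝ) :
    MvPolynomial.eval (fun i => c * x i) g = c ^ d * MvPolynomial.eval x g := by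
  rw [eval_eq', eval_eq', Finset.mul_sum]
  refine Finset.sum_congr rfl fun m hm => ?_
  have hdeg : Finsupp.degree m = d := by
    rw [Finsupp.degree_eq_weight_one]
    exact hg (mem_support_iff.mp hm)
  have : ∏ i, (c * x i) ^ m i = c ^ d * ∏ i, x i ^ m i := by
    have h1 : ∏ i, (c * x i) ^ m i = (∏ i, c ^ m i) * ∏ i, x i ^ m i := by
      rw [← Finset.prod_mul_distrib]
      exact Finset.prod_congr rfl fun i _ => mul_pow _ _ _
    rw [h1, Finset.prod_pow_eq_pow_sum]
    congr 2
    rw [← hdeg, Finsupp.degree]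
    exact (Finset.sum_subset (Finset.subset_univ _)
      (fun i _ hi => Finsupp.notMem_support_iff.mp hi)).symm
  rw [this]; ring

lemma evalP_smul {n d : ℕ} {g : MvPolynomial (Fin n) ℝ} (hg : g.IsHomogeneous d)
    (c : ℝ) (x : En n) : evalP g (c • x) = c ^ d * evalP g x := by
  have : (fun i => (c • x) i) = fun i => c * x i := by
    funext i; simp
  rw [evalP, this, evalScale hg]
  rfl

lemma evalP_zero_of_homog {n d : ℕ} {g : MvPolynomial (Fin n) ℝ} (hg : g.IsHomogeneous d)
    (hd : 1 ≤ d) : evalP g (0 : En n) = 0 := by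
  have h0 : (0 : En n) = (0 : ℝ) • (0 : En n) := by simp
  rw [h0, evalP_smul hg, zero_pow (by omega), zero_mul]

lemma l2Norm_nonneg {n : ℕ} (p : MvPolynomial (Fin n) ℝ) : 0 ≤ l2Norm p := Real.sqrt_nonneg _

lemma abs_coeff_le {n : ℕ} (p : MvPolynomial (Fin n) ℝ) (m : Fin n →₀ ℕ) :
    |coeff m p| ≤ l2Norm p := by
  by_cases hm : m ∈ p.support
  · rw [← Real.sqrt_sq_eq_abs]
    exact Real.sqrt_le_sqrt (Finset.single_le_sum (f := fun m => (coeff m p)^2)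
      (fun i _ => sq_nonneg _) hm)
  · rw [notMem_support_iff.mp hm]
    simpa using l2Norm_nonneg p

/-- the dominating finset of exponents -/
def expT (n d : ℕ) : Finset (Fin n →₀ ℕ) :=
  Finset.Iic (Finsupp.equivFunOnFinite.symm (fun _ => d))

def Mfun {n : ℕ} (d : ℕ) (x : Fin n → ℝ) : ℝ :=
  ∑ m ∈ expT n d, |∏ i, x i ^ m i|

lemma Mfun_nonneg {n : ℕ} (d : ℕ) (x : Fin n → ℝ) : 0 ≤ Mfun d x :=
  Finset.sum_nonneg fun _ _ => abs_nonneg _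

lemma support_subset_expT {n d : ℕ} {p : MvPolynomial (Fin n) ℝ} (hp : p.IsHomogeneous d) :
    p.support ⊆ expT n d := by
  intro m hm
  have hdeg : Finsupp.degree m = d := by
    rw [Finsupp.degree_eq_weight_one]; exact hp (mem_support_iff.mp hm)
  rw [expT, Finset.mem_Iic]
  intro i
  change m i ≤ d
  by_cases hi : i ∈ m.support
  · calc m i ≤ Finsupp.degree m := Finset.single_le_sum (fun j _ => Nat.zero_le _) hi
    _ = d := hdeg
  · simp [Finsupp.notMem_support_iff.mp hi]

lemma abs_eval_le {n d : ℕ} {p : MvPolynomial (Fin n) ℝ} (hp : p.IsHomogeneous d)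
    (x : Fin n → ℝ) : |MvPolynomial.eval x p| ≤ l2Norm p * Mfun d x := by
  rw [eval_eq']
  calc |∑ m ∈ p.support, coeff m p * ∏ i, x i ^ m i|
      ≤ ∑ m ∈ p.support, |coeff m p * ∏ i, x i ^ m i| := Finset.abs_sum_le_sum_abs _ _
    _ ≤ ∑ m ∈ p.support, l2Norm p * |∏ i, x i ^ m i| := by
        refine Finset.sum_le_sum fun m _ => ?_
        rw [abs_mul]
        exact mul_le_mul_of_nonneg_right (abs_coeff_le p m) (abs_nonneg _)
    _ ≤ ∑ m ∈ expT n d, l2Norm p * |∏ i, x i ^ m i| := by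
        refine Finset.sum_le_sum_of_subset_of_nonneg (support_subset_expT hp) fun m _ _ => ?_
        exact mul_nonneg (l2Norm_nonneg p) (abs_nonneg _)
    _ = l2Norm p * Mfun d x := by rw [Mfun, Finset.mul_sum]

lemma Mfun_continuous {n : ℕ} (d : ℕ) :
    Continuous fun x : En n => Mfun d (fun i => x i) := by
  refine continuous_finset_sum _ fun m _ => ?_
  exact (continuous_finset_prod _ fun i _ =>
    ((EuclideanSpace.proj i : En n →L[ℝ] ℝ).continuous).pow _).abs

lemma evalP_continuous {n : ℕ} (g : MvPolynomial (Fin n) ℝ) : Continuous (evalP g) := by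
  have : evalP g = fun x : En n => ∑ m ∈ g.support, coeff m g * ∏ i, (x i) ^ m i := by
    funext x; exact eval_eq' _ _
  rw [this]
  refine continuous_finset_sum _ fun m _ => ?_
  exact continuous_const.mul (continuous_finset_prod _ fun i _ =>
    ((EuclideanSpace.proj i : En n →L[ℝ] ℝ).continuous).pow _)

lemma evalP_sub {n : ℕ} (f g : MvPolynomial (Fin n) ℝ) (x : En n) :
    evalP (f - g) x = evalP f x - evalP g x := by
  unfold evalP; exact map_sub _ _ _

lemma l2Norm_sub_self {n : ℕ} (g : MvPolynomial (Fin n) ℝ) : l2Norm (g - g) = 0 := by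
  simp [l2Norm]

/-- For a polyhedral cone `C = {x : Ax ≥ 0}` with `A` of full rank, there is a generic
(residual) set `G_d` in the space `H_d` of homogeneous polynomials of degree `d` such that
`Sol(C,g)` is finite for every `g ∈ G_d`. -/
theorem stmt18 {n p d : ℕ} (hd : 1 ≤ d) (A : Matrix (Fin p) (Fin n) ℝ)
    (hA : LinearIndependent ℝ A)
    (C : Set (En n)) (hC : C = {x | ∀ i, 0 ≤ A.mulVec (fun j => x j) i}) :
    IsGenericIn {h : MvPolynomial (Fin n) ℝ | h.IsHomogeneous d}
      {h : MvPolynomial (Fin n) ℝ | h.IsHomogeneous d ∧ Set.Finite (solSet C (evalP h))} := by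
  classical
  -- basic facts about C
  have hC0 : (0 : En n) ∈ C := by
    rw [hC]
    intro i
    have h0 : A.mulVec (fun j => (0 : En n) j) = 0 := by
      have : (fun j => (0 : En n) j) = (0 : Fin n → ℝ) := by funext j; simp
      rw [this, Matrix.mulVec_zero]
    rw [h0]
    exact le_refl _
  have hCone : ∀ (c : ℝ), 0 ≤ c → ∀ x ∈ C, c • x ∈ C := by
    intro c hc x hx
    rw [hC] at hx ⊢
    intro i
    have : (fun j => (c • x) j) = c • (fun j => x j) := by funext j; simp
    rw [this, Matrix.mulVec_smul]
    exact mul_nonneg hc (hx i)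
  have hCclosed : IsClosed C := by
    rw [hC]
    have : {x : En n | ∀ i, 0 ≤ A.mulVec (fun j => x j) i} =
        ⋂ i, {x : En n | 0 ≤ A.mulVec (fun j => x j) i} := by
      ext x; simp
    rw [this]
    refine isClosed_iInter fun i => ?_
    have hcont : Continuous fun x : En n => A.mulVec (fun j => x j) i := by
      have : (fun x : En n => A.mulVec (fun j => x j) i) =
          fun x : En n => ∑ j, A i j * x j := by
        funext x; simp [Matrix.mulVec, dotProduct]
      rw [this]
      exact continuous_finset_sum _ fun j _ => continuous_const.mul
        ((EuclideanSpace.proj j : En n →L[ℝ] ℝ).continuous)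
    exact isClosed_le continuous_const hcont
  set Xh : Set (MvPolynomial (Fin n) ℝ) := {h | h.IsHomogeneous d} with hXh
  set N : Set (MvPolynomial (Fin n) ℝ) :=
    {g | g.IsHomogeneous d ∧ ∃ x ∈ C, evalP g x < 0} with hN
  set U : Set (MvPolynomial (Fin n) ℝ) :=
    {g | g.IsHomogeneous d ∧ ∀ x ∈ C, x ≠ 0 → 0 < evalP g x} with hU
  refine ⟨fun _ => N ∪ U, fun k => ⟨?_, ?_, ?_⟩, ?_⟩
  · -- subset
    rintro g (hg | hg) <;> exact hg.1
  · -- openness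
    rintro g (⟨hgh, x₀, hx₀C, hneg⟩ | ⟨hgh, hpos⟩)
    · refine ⟨(-evalP g x₀) / (Mfun d (fun i => x₀ i) + 1),
        div_pos (by linarith) (by linarith [Mfun_nonneg d (fun i => x₀ i)]), fun g' hg' hlt => ?_⟩
      left
      refine ⟨hg', x₀, hx₀C, ?_⟩
      have hb := abs_eval_le (hg'.sub hgh) (fun i => x₀ i)
      have hb' : |evalP g' x₀ - evalP g x₀| < -evalP g x₀ := by
        rw [← evalP_sub]
        calc |evalP (g' - g) x₀| ≤ l2Norm (g' - g) * Mfun d (fun i => x₀ i) := hb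
          _ ≤ l2Norm (g' - g) * (Mfun d (fun i => x₀ i) + 1) := by
              exact mul_le_mul_of_nonneg_left (by linarith) (l2Norm_nonneg _)
          _ < ((-evalP g x₀) / (Mfun d (fun i => x₀ i) + 1)) * (Mfun d (fun i => x₀ i) + 1) := by
              refine mul_lt_mul_of_pos_right hlt ?_
              have := Mfun_nonneg d (fun i => x₀ i); linarith
          _ = -evalP g x₀ := div_mul_cancel₀ _ (by linarith [Mfun_nonneg d (fun i => x₀ i)])
      have := abs_lt.mp hb'
      linarith [this.2]
    · by_cases hex : ∃ x ∈ C, x ≠ 0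
      · obtain ⟨w, hwC, hw0⟩ := hex
        set K := C ∩ Metric.sphere (0 : En n) 1 with hK
        have hKc : IsCompact K :=
          (isCompact_sphere (0 : En n) 1).of_isClosed_subset
            (hCclosed.inter Metric.isClosed_sphere) Set.inter_subset_right
        have hKne : K.Nonempty := by
          refine ⟨‖w‖⁻¹ • w, hCone _ (inv_nonneg.mpr (norm_nonneg w)) w hwC, ?_⟩
          rw [mem_sphere_zero_iff_norm, norm_smul]
          simp [norm_ne_zero_iff.mpr hw0]
        obtain ⟨y₀, hy₀K, hy₀min⟩ := hKc.exists_isMinOn hKne (evalP_continuous g).continuousOn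
        obtain ⟨z₀, hz₀K, hz₀max⟩ := hKc.exists_isMaxOn hKne (Mfun_continuous (n := n) d).continuousOn
        have hy₀0 : y₀ ≠ 0 := by
          intro h
          have := hy₀K.2
          rw [h, mem_sphere_zero_iff_norm] at this
          simp at this
        have hδ : 0 < evalP g y₀ := hpos y₀ hy₀K.1 hy₀0
        set M := Mfun d (fun i => z₀ i) with hM
        have hM0 : 0 ≤ M := Mfun_nonneg _ _
        refine ⟨evalP g y₀ / (M + 1), div_pos hδ (by linarith), fun g' hg' hlt => ?_⟩
        right
        refine ⟨hg', fun x hxC hx0 => ?_⟩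
        set y := ‖x‖⁻¹ • x with hy
        have hyK : y ∈ K := by
          refine ⟨hCone _ (inv_nonneg.mpr (norm_nonneg x)) x hxC, ?_⟩
          rw [mem_sphere_zero_iff_norm, hy, norm_smul]
          simp [norm_ne_zero_iff.mpr hx0]
        have hgy : 0 < evalP g' y := by
          have hb := abs_eval_le (hg'.sub hgh) (fun i => y i)
          have h1 : Mfun d (fun i => y i) ≤ M := hz₀max hyK
          have h2 : |evalP g' y - evalP g y| < evalP g y := by
            rw [← evalP_sub]
            calc |evalP (g' - g) y| ≤ l2Norm (g' - g) * Mfun d (fun i => y i) := hb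
              _ ≤ l2Norm (g' - g) * (M + 1) := by
                  exact mul_le_mul_of_nonneg_left (by linarith) (l2Norm_nonneg _)
              _ < (evalP g y₀ / (M + 1)) * (M + 1) := by
                  refine mul_lt_mul_of_pos_right hlt (by linarith)
              _ = evalP g y₀ := div_mul_cancel₀ _ (by linarith)
              _ ≤ evalP g y := hy₀min hyK
          have := abs_lt.mp h2
          linarith [this.1]
        have hxy : x = ‖x‖ • y := by
          rw [hy, smul_smul, mul_inv_cancel₀ (norm_ne_zero_iff.mpr hx0), one_smul]
        rw [hxy, evalP_smul hg']
        have : (0:ℝ) < ‖x‖ ^ d := pow_pos (norm_pos_iff.mpr hx0) d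
        positivity
      · refine ⟨1, one_pos, fun g' hg' _ => ?_⟩
        right
        exact ⟨hg', fun x hx hx0 => absurd ⟨x, hx, hx0⟩ hex⟩
  · -- density
    intro g hgX ε hε
    by_cases hg : g ∈ N ∪ U
    · exact ⟨g, hg, by rw [l2Norm_sub_self]; exact hε⟩
    · have hgN : g ∉ N := fun h => hg (Or.inl h)
      have hgU : g ∉ U := fun h => hg (Or.inr h)
      have hnonneg : ∀ x ∈ C, 0 ≤ evalP g x := by
        intro x hx
        by_contra h
        exact hgN ⟨hgX, x, hx, by linarith⟩
      obtain ⟨v, hvC, hv0, hvle⟩ : ∃ x ∈ C, x ≠ 0 ∧ ¬(0 < evalP g x) := by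
        by_contra h
        push_neg at h
        exact hgU ⟨hgX, fun x hx hx0 => h x hx hx0⟩
      have hgv : evalP g v = 0 := by
        push_neg at hvle
        exact le_antisymm hvle (hnonneg v hvC)
      obtain ⟨i, hi⟩ : ∃ i, v i ≠ 0 := by
        by_contra h
        push_neg at h
        exact hv0 (by ext j; simpa using h j)
      set s : ℝ := (v i) ^ d with hs
      have hs0 : s ≠ 0 := pow_ne_zero _ hi
      set c : ℝ := (ε / 2) * s / |s| with hc
      have hc0 : c ≠ 0 := by
        rw [hc]
        have : |s| ≠ 0 := abs_ne_zero.mpr hs0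
        positivity
      set r : MvPolynomial (Fin n) ℝ := (X i : MvPolynomial (Fin n) ℝ) ^ d with hr
      have hrh : r.IsHomogeneous d := by
        have := (isHomogeneous_X ℝ i).pow d
        simpa using this
      have hcrh : (c • r).IsHomogeneous d :=
        (homogeneousSubmodule (Fin n) ℝ d).smul_mem c hrh
      refine ⟨g - c • r, Or.inl ⟨hgX.sub hcrh, v, hvC, ?_⟩, ?_⟩
      · have hrv : evalP r v = s := by
          rw [hr, evalP]
          simp [hs]
        have hsm : evalP (c • r) v = c * evalP r v := by
          unfold evalP; exact smul_eval _ _ _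
        have : evalP (g - c • r) v = evalP g v - c * evalP r v := by
          rw [evalP_sub, hsm]
        rw [this, hgv, hrv, zero_sub, hc, neg_lt, neg_zero]
        have : (ε / 2) * s / |s| * s = (ε / 2) * (s ^ 2 / |s|) := by ring
        rw [this]
        have h1 : 0 < s ^ 2 / |s| := by positivity
        positivity
      · have : g - c • r - g = -(c • r) := by ring
        rw [this]
        have hmono : -(c • r) = monomial (Finsupp.single i d) (-c) := by
          rw [hr, X_pow_eq_monomial, smul_monomial]
          rw [show c • (1:ℝ) = c from by simp]
          exact (map_neg (monomial (Finsupp.single i d)) c).symm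
        rw [hmono]
        have hsupp : (monomial (Finsupp.single i d) (-c)).support = {Finsupp.single i d} := by
          rw [support_monomial, if_neg (neg_ne_zero.mpr hc0)]
        rw [l2Norm, hsupp]
        rw [Finset.sum_singleton, coeff_monomial, if_pos rfl]
        have habs : Real.sqrt ((-c) ^ 2) = |c| := by
          rw [Real.sqrt_sq_eq_abs, abs_neg]
        rw [habs, hc, abs_div, abs_mul, abs_abs, abs_of_pos (half_pos hε),
          mul_div_assoc, div_self (abs_ne_zero.mpr hs0), mul_one]
        linarith
  · -- intersection is in S
    rintro g ⟨hgX, hgD⟩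
    have hg : g ∈ N ∪ U := Set.mem_iInter.mp hgD 0
    refine ⟨hgX, ?_⟩
    rcases hg with ⟨hgh, x₀, hx₀C, hneg⟩ | ⟨hgh, hpos⟩
    · have : solSet C (evalP g) = ∅ := by
        ext x
        simp only [solSet, Set.mem_setOf_eq, Set.mem_empty_iff_false, iff_false, not_and]
        intro hxC hmin
        set t : ℝ := evalP g x / evalP g x₀ + 1 with ht
        have hgx : evalP g x ≤ evalP g x₀ := hmin x₀ hx₀C
        have hratio : 1 ≤ evalP g x / evalP g x₀ := by
          rw [le_div_iff_of_neg hneg]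
          linarith
        have ht1 : 1 < t := by rw [ht]; linarith
        have htpos : (0:ℝ) ≤ t := by linarith
        have htd : t ≤ t ^ d := le_self_pow₀ (by linarith) (by omega)
        have hmem : t • x₀ ∈ C := hCone t htpos x₀ hx₀C
        have := hmin (t • x₀) hmem
        rw [evalP_smul hgh] at this
        have hlt : t ^ d * evalP g x₀ < evalP g x := by
          calc t ^ d * evalP g x₀ ≤ t * evalP g x₀ := by
                exact mul_le_mul_of_nonpos_right htd (le_of_lt hneg)
            _ < (evalP g x / evalP g x₀) * evalP g x₀ := by
                refine (mul_lt_mul_right_of_neg hneg).mpr ?_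
                rw [ht]; linarith
            _ = evalP g x := div_mul_cancel₀ _ (ne_of_lt hneg)
        linarith
      rw [this]; exact Set.finite_empty
    · refine Set.Finite.subset (Set.finite_singleton (0 : En n)) ?_
      intro x hx
      simp only [Set.mem_singleton_iff]
      by_contra hx0
      have h1 : 0 < evalP g x := hpos x hx.1 hx0
      have h2 : evalP g x ≤ evalP g 0 := hx.2 0 hC0
      rw [evalP_zero_of_homog hgh hd] at h2
      linarith

end
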